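/- Let f : ℕ → ℕ have a Diophantine graph. Then for every sufficiently large n there exists a system S ⊆ E_n (equations of forms x_i = 1, x_i + x_j = x_k, x_i · x_j = x_k with indices in {1,...,n}) such that S has a solution in non-negative integers, and every solution (x_1,...,x_n) in non-negative integers satisfies x_1 = f(n). -/

import Mathlib

/-- An equation from the set `E_n`: `x_i = 1`, `x_i + x_j = x_k`, or `x_i * x_j = x_k`
with indices in `{1, ..., n}` (here `Fin n`). -/
inductive Eqn (n : ℕ) where
  | one (i : Fin n)
  | add (i j k : Fin n)
  | mul (i j k : Fin n)

/-- The equation holds for an assignment `x` of values in a commutative semiring. -/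
def Eqn.Holds {n : ℕ} {K : Type*} [CommSemiring K] (x : Fin n → K) : Eqn n → Prop
  | .one i => x i = 1
  | .add i j k => x i + x j = x k
  | .mul i j k => x i * x j = x k

namespace Stmt15Aux

/-- Straight-line expressions over `r` input variables. -/
inductive Expr (r : ℕ) where
  | zero | one
  | X (i : Fin r)
  | add (a b : Expr r)
  | mul (a b : Expr r)
  | double (a : Expr r)

def Expr.eval {r : ℕ} (x : Fin r → ℕ) : Expr r → ℕ
  | .zero => 0
  | .one => 1
  | .X i => x i
  | .add a b => a.eval x + b.eval x
  | .mul a b => a.eval x * b.eval x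
  | .double a => a.eval x + a.eval x

def Expr.size {r : ℕ} : Expr r → ℕ
  | .zero => 1
  | .one => 1
  | .X _ => 2
  | .add a b => a.size + b.size + 1
  | .mul a b => a.size + b.size + 1
  | .double a => a.size + 1

lemma Expr.size_pos {r : ℕ} (e : Expr r) : 0 < e.size := by
  cases e <;> simp [Expr.size]

/-- Binary expansion of a constant `m` as an expression. -/
def bin (r m : ℕ) : Expr r :=
  if m ≤ 1 then (if m = 0 then .zero else .one)
  else if m % 2 = 1 then .add (.double (bin r (m / 2))) .one
  else .double (bin r (m / 2))
decreasing_by all_goals omega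

lemma bin_eval (r m : ℕ) (x : Fin r → ℕ) : (bin r m).eval x = m := by
  induction m using Nat.strong_induction_on with
  | _ m ih =>
    rw [bin]
    split_ifs with h1 h2 h3
    · simp [Expr.eval]; omega
    · simp [Expr.eval]; omega
    · have := ih (m / 2) (by omega)
      simp [Expr.eval, this]; omega
    · have := ih (m / 2) (by omega)
      simp [Expr.eval, this]; omega

lemma bin_size_lt (r : ℕ) : ∀ k m, m < 2 ^ k → (bin r m).size ≤ 3 * k + 1 := by
  intro k
  induction k with
  | zero =>
    intro m hm
    interval_cases m
    rw [bin]; simp [Expr.size]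
  | succ k ih =>
    intro m hm
    have hp : 2 ^ (k + 1) = 2 * 2 ^ k := by ring
    rw [bin]
    split_ifs with h1 h2 h3
    · simp only [Expr.size]; omega
    · simp only [Expr.size]; omega
    · have := ih (m / 2) (by omega)
      simp only [Expr.size]; omega
    · have := ih (m / 2) (by omega)
      simp only [Expr.size]; omega

lemma lt_two_pow_div6 (n : ℕ) : n < 2 ^ (n / 6 + 6) := by
  induction n using Nat.strong_induction_on with
  | _ n ih =>
    by_cases h : n < 12
    · calc n < 2 ^ 6 := by omega
        _ ≤ 2 ^ (n / 6 + 6) := Nat.pow_le_pow_right (by norm_num) (by omega)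
    · have h2 := ih (n / 2) (by omega)
      have h3 : 2 ^ (n / 2 / 6 + 6 + 1) ≤ 2 ^ (n / 6 + 6) :=
        Nat.pow_le_pow_right (by norm_num) (by omega)
      calc n < 2 * (n / 2) + 2 := by omega
        _ ≤ 2 * 2 ^ (n / 2 / 6 + 6) := by omega
        _ = 2 ^ (n / 2 / 6 + 6 + 1) := by ring
        _ ≤ 2 ^ (n / 6 + 6) := h3

lemma bin_size_bound (r n : ℕ) : (bin r n).size ≤ n / 2 + 19 := by
  have h1 := bin_size_lt r (n / 6 + 6) n (lt_two_pow_div6 n)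
  omega
/-- Instructions over an unbounded register file. -/
inductive Instr where
  | one (d : ℕ)
  | zero (d : ℕ)
  | add (a b d : ℕ)
  | mul (a b d : ℕ)

def Instr.Holds (v : ℕ → ℕ) : Instr → Prop
  | .one d => v d = 1
  | .zero d => v d = 0
  | .add a b d => v a + v b = v d
  | .mul a b d => v a * v b = v d

def Instr.Below (c : ℕ) : Instr → Prop
  | .one d => d < c
  | .zero d => d < c
  | .add a b d => a < c ∧ b < c ∧ d < c
  | .mul a b d => a < c ∧ b < c ∧ d < c

lemma Instr.below_mono {c c' : ℕ} (h : c ≤ c') {ins : Instr} (hb : ins.Below c) :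
    ins.Below c' := by
  cases ins <;> simp [Instr.Below] at * <;> omega

lemma Instr.holds_of_agree {c : ℕ} {v v' : ℕ → ℕ} {ins : Instr} (hb : ins.Below c)
    (ha : ∀ j < c, v' j = v j) (h : ins.Holds v) : ins.Holds v' := by
  cases ins <;> simp [Instr.Below] at hb <;>
    simp only [Instr.Holds] at * <;>
    (try rw [ha _ hb]) <;>
    (try rw [ha _ hb.1, ha _ hb.2.1, ha _ hb.2.2]) <;> exact h

/-- Compile an expression, starting at fresh register `c`; returns the
instruction list and the next fresh register (result is in register `c' - 1`). -/
def comp {r : ℕ} : Expr r → ℕ → List Instr × ℕ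
  | .zero, c => ([.zero c], c + 1)
  | .one, c => ([.one c], c + 1)
  | .X i, c => ([.one c, .mul i c (c + 1)], c + 2)
  | .add a b, c =>
      ((comp a c).1 ++ (comp b (comp a c).2).1 ++
        [.add ((comp a c).2 - 1) ((comp b (comp a c).2).2 - 1) (comp b (comp a c).2).2],
       (comp b (comp a c).2).2 + 1)
  | .mul a b, c =>
      ((comp a c).1 ++ (comp b (comp a c).2).1 ++
        [.mul ((comp a c).2 - 1) ((comp b (comp a c).2).2 - 1) (comp b (comp a c).2).2],
       (comp b (comp a c).2).2 + 1)
  | .double a, c =>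
      ((comp a c).1 ++ [.add ((comp a c).2 - 1) ((comp a c).2 - 1) (comp a c).2],
       (comp a c).2 + 1)

lemma comp_snd {r : ℕ} (e : Expr r) (c : ℕ) : (comp e c).2 = c + e.size := by
  induction e generalizing c <;> simp [comp, Expr.size, *] <;> omega

lemma comp_below {r : ℕ} (e : Expr r) (c : ℕ) (hrc : r ≤ c) :
    ∀ ins ∈ (comp e c).1, ins.Below (comp e c).2 := by
  induction e generalizing c with
  | zero => intro ins h; simp [comp] at h ⊢; subst h; simp [Instr.Below]
  | one => intro ins h; simp [comp] at h ⊢; subst h; simp [Instr.Below]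
  | X i =>
    intro ins h; simp [comp] at h ⊢
    rcases h with h | h <;> subst h <;> simp [Instr.Below] <;> omega
  | add a b iha ihb =>
    have h1 := comp_snd a c
    have h2 := comp_snd b (comp a c).2
    have hpa := a.size_pos
    have hpb := b.size_pos
    intro ins h
    simp only [comp, List.mem_append, List.mem_singleton] at h ⊢
    rcases h with (h | h) | h
    · exact Instr.below_mono (by omega) (iha c hrc ins h)
    · exact Instr.below_mono (by omega) (ihb (comp a c).2 (by omega) ins h)
    · subst h; simp [Instr.Below]; omega
  | mul a b iha ihb =>
    have h1 := comp_snd a c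
    have h2 := comp_snd b (comp a c).2
    have hpa := a.size_pos
    have hpb := b.size_pos
    intro ins h
    simp only [comp, List.mem_append, List.mem_singleton] at h ⊢
    rcases h with (h | h) | h
    · exact Instr.below_mono (by omega) (iha c hrc ins h)
    · exact Instr.below_mono (by omega) (ihb (comp a c).2 (by omega) ins h)
    · subst h; simp [Instr.Below]; omega
  | double a iha =>
    have h1 := comp_snd a c
    have hpa := a.size_pos
    intro ins h
    simp only [comp, List.mem_append, List.mem_singleton] at h ⊢
    rcases h with h | h
    · exact Instr.below_mono (by omega) (iha c hrc ins h)
    · subst h; simp [Instr.Below]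
lemma comp_forced {r : ℕ} (e : Expr r) (c : ℕ) (hrc : r ≤ c) (v : ℕ → ℕ)
    (xin : Fin r → ℕ) (hag : ∀ i : Fin r, v i = xin i)
    (hh : ∀ ins ∈ (comp e c).1, ins.Holds v) :
    v ((comp e c).2 - 1) = e.eval xin := by
  induction e generalizing c with
  | zero =>
    have := hh (.zero c) (by simp [comp])
    simpa [comp, Instr.Holds, Expr.eval] using this
  | one =>
    have := hh (.one c) (by simp [comp])
    simpa [comp, Instr.Holds, Expr.eval] using this
  | X i =>
    have h1 := hh (.one c) (by simp [comp])
    have h2 := hh (.mul i c (c + 1)) (by simp [comp])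
    simp only [Instr.Holds] at h1 h2
    simp only [comp, Expr.eval]
    rw [show c + 2 - 1 = c + 1 by omega, ← h2, h1, hag i, mul_one]
  | add a b iha ihb =>
    have h1 := comp_snd a c
    have h2 := comp_snd b (comp a c).2
    have hpa := a.size_pos
    have hpb := b.size_pos
    have ha : v ((comp a c).2 - 1) = a.eval xin :=
      iha c hrc (fun ins hins => hh ins (by simp [comp]; tauto))
    have hb : v ((comp b (comp a c).2).2 - 1) = b.eval xin :=
      ihb (comp a c).2 (by omega) (fun ins hins => hh ins (by simp [comp]; tauto))
    have h3 := hh (.add ((comp a c).2 - 1) ((comp b (comp a c).2).2 - 1)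
      (comp b (comp a c).2).2) (by simp [comp])
    simp only [Instr.Holds] at h3
    simp only [comp, Expr.eval]
    rw [show (comp b (comp a c).2).2 + 1 - 1 = (comp b (comp a c).2).2 by omega,
      ← h3, ha, hb]
  | mul a b iha ihb =>
    have h1 := comp_snd a c
    have h2 := comp_snd b (comp a c).2
    have hpa := a.size_pos
    have hpb := b.size_pos
    have ha : v ((comp a c).2 - 1) = a.eval xin :=
      iha c hrc (fun ins hins => hh ins (by simp [comp]; tauto))
    have hb : v ((comp b (comp a c).2).2 - 1) = b.eval xin :=
      ihb (comp a c).2 (by omega) (fun ins hins => hh ins (by simp [comp]; tauto))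
    have h3 := hh (.mul ((comp a c).2 - 1) ((comp b (comp a c).2).2 - 1)
      (comp b (comp a c).2).2) (by simp [comp])
    simp only [Instr.Holds] at h3
    simp only [comp, Expr.eval]
    rw [show (comp b (comp a c).2).2 + 1 - 1 = (comp b (comp a c).2).2 by omega,
      ← h3, ha, hb]
  | double a iha =>
    have h1 := comp_snd a c
    have hpa := a.size_pos
    have ha : v ((comp a c).2 - 1) = a.eval xin :=
      iha c hrc (fun ins hins => hh ins (by simp [comp]; tauto))
    have h3 := hh (.add ((comp a c).2 - 1) ((comp a c).2 - 1) (comp a c).2)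
      (by simp [comp])
    simp only [Instr.Holds] at h3
    simp only [comp, Expr.eval]
    rw [show (comp a c).2 + 1 - 1 = (comp a c).2 by omega, ← h3, ha]

lemma comp_sat {r : ℕ} (e : Expr r) (c : ℕ) (hrc : r ≤ c) (v : ℕ → ℕ) :
    ∃ v' : ℕ → ℕ, (∀ j < c, v' j = v j) ∧ ∀ ins ∈ (comp e c).1, ins.Holds v' := by
  induction e generalizing c v with
  | zero =>
    refine ⟨Function.update v c 0, fun j hj => Function.update_of_ne (by omega) _ _, ?_⟩
    intro ins h; simp [comp] at h; subst h
    simp [Instr.Holds]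
  | one =>
    refine ⟨Function.update v c 1, fun j hj => Function.update_of_ne (by omega) _ _, ?_⟩
    intro ins h; simp [comp] at h; subst h
    simp [Instr.Holds]
  | X i =>
    refine ⟨Function.update (Function.update v c 1) (c + 1) (v i), ?_, ?_⟩
    · intro j hj
      rw [Function.update_of_ne (by omega), Function.update_of_ne (by omega)]
    · intro ins h; simp [comp] at h
      have hic : (i : ℕ) < c := lt_of_lt_of_le i.isLt hrc
      rcases h with h | h <;> subst h <;> simp only [Instr.Holds]
      · rw [Function.update_of_ne (by omega), Function.update_self]
      · rw [Function.update_of_ne (by omega), Function.update_of_ne (by omega),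
          Function.update_of_ne (by omega), Function.update_self, Function.update_self,
          mul_one]
  | add a b iha ihb =>
    have h1 := comp_snd a c
    have h2 := comp_snd b (comp a c).2
    have hpa := a.size_pos
    have hpb := b.size_pos
    obtain ⟨v1, hv1a, hv1s⟩ := iha c hrc v
    obtain ⟨v2, hv2a, hv2s⟩ := ihb (comp a c).2 (by omega) v1
    refine ⟨Function.update v2 (comp b (comp a c).2).2
      (v2 ((comp a c).2 - 1) + v2 ((comp b (comp a c).2).2 - 1)), ?_, ?_⟩
    · intro j hj
      rw [Function.update_of_ne (by omega), hv2a j (by omega), hv1a j hj]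
    · have hag2 : ∀ j < (comp b (comp a c).2).2,
          Function.update v2 (comp b (comp a c).2).2
            (v2 ((comp a c).2 - 1) + v2 ((comp b (comp a c).2).2 - 1)) j = v2 j :=
        fun j hj => Function.update_of_ne (by omega) _ _
      intro ins h
      simp only [comp, List.mem_append, List.mem_singleton] at h
      rcases h with (h | h) | h
      · refine Instr.holds_of_agree (comp_below a c hrc ins h)
          (fun j hj => ?_) (hv1s ins h)
        rw [hag2 j (by omega), hv2a j (by omega)]
      · exact Instr.holds_of_agree (comp_below b (comp a c).2 (by omega) ins h)
          (fun j hj => hag2 j hj) (hv2s ins h)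
      · subst h
        simp only [Instr.Holds]
        rw [hag2 _ (by omega), hag2 _ (by omega), Function.update_self]
  | mul a b iha ihb =>
    have h1 := comp_snd a c
    have h2 := comp_snd b (comp a c).2
    have hpa := a.size_pos
    have hpb := b.size_pos
    obtain ⟨v1, hv1a, hv1s⟩ := iha c hrc v
    obtain ⟨v2, hv2a, hv2s⟩ := ihb (comp a c).2 (by omega) v1
    refine ⟨Function.update v2 (comp b (comp a c).2).2
      (v2 ((comp a c).2 - 1) * v2 ((comp b (comp a c).2).2 - 1)), ?_, ?_⟩
    · intro j hj
      rw [Function.update_of_ne (by omega), hv2a j (by omega), hv1a j hj]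
    · have hag2 : ∀ j < (comp b (comp a c).2).2,
          Function.update v2 (comp b (comp a c).2).2
            (v2 ((comp a c).2 - 1) * v2 ((comp b (comp a c).2).2 - 1)) j = v2 j :=
        fun j hj => Function.update_of_ne (by omega) _ _
      intro ins h
      simp only [comp, List.mem_append, List.mem_singleton] at h
      rcases h with (h | h) | h
      · refine Instr.holds_of_agree (comp_below a c hrc ins h)
          (fun j hj => ?_) (hv1s ins h)
        rw [hag2 j (by omega), hv2a j (by omega)]
      · exact Instr.holds_of_agree (comp_below b (comp a c).2 (by omega) ins h)
          (fun j hj => hag2 j hj) (hv2s ins h)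
      · subst h
        simp only [Instr.Holds]
        rw [hag2 _ (by omega), hag2 _ (by omega), Function.update_self]
  | double a iha =>
    have h1 := comp_snd a c
    have hpa := a.size_pos
    obtain ⟨v1, hv1a, hv1s⟩ := iha c hrc v
    refine ⟨Function.update v1 (comp a c).2
      (v1 ((comp a c).2 - 1) + v1 ((comp a c).2 - 1)), ?_, ?_⟩
    · intro j hj
      rw [Function.update_of_ne (by omega), hv1a j hj]
    · have hag2 : ∀ j < (comp a c).2,
          Function.update v1 (comp a c).2
            (v1 ((comp a c).2 - 1) + v1 ((comp a c).2 - 1)) j = v1 j :=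
        fun j hj => Function.update_of_ne (by omega) _ _
      intro ins h
      simp only [comp, List.mem_append, List.mem_singleton] at h
      rcases h with h | h
      · exact Instr.holds_of_agree (comp_below a c hrc ins h)
          (fun j hj => hag2 j hj) (hv1s ins h)
      · subst h
        simp only [Instr.Holds]
        rw [Function.update_self,
          Function.update_of_ne (show (comp a c).2 - 1 ≠ (comp a c).2 by omega)]
lemma poly_expr {r : ℕ} (P : MvPolynomial (Fin r) ℕ) :
    ∃ e : Expr r, ∀ x : Fin r → ℕ, e.eval x = MvPolynomial.eval x P := by
  induction P using MvPolynomial.induction_on with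
  | C a => exact ⟨bin r a, fun x => by simp [bin_eval]⟩
  | add p q hp hq =>
    obtain ⟨ep, hep⟩ := hp
    obtain ⟨eq, heq⟩ := hq
    exact ⟨.add ep eq, fun x => by simp [Expr.eval, hep, heq]⟩
  | mul_X p i hp =>
    obtain ⟨ep, hep⟩ := hp
    exact ⟨.mul ep (.X i), fun x => by simp [Expr.eval, hep]⟩

lemma int_split {r : ℕ} (W : MvPolynomial (Fin r) ℤ) :
    ∃ P Q : MvPolynomial (Fin r) ℕ, ∀ x : Fin r → ℕ,
      MvPolynomial.aeval (fun i => (x i : ℤ)) W =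
        (MvPolynomial.eval x P : ℤ) - (MvPolynomial.eval x Q : ℤ) := by
  induction W using MvPolynomial.induction_on with
  | C a =>
    refine ⟨MvPolynomial.C a.toNat, MvPolynomial.C (-a).toNat, fun x => ?_⟩
    simp only [MvPolynomial.aeval_C, MvPolynomial.eval_C]
    simp only [algebraMap_int_eq, eq_intCast, Int.cast_id]
    omega
  | add p q hp hq =>
    obtain ⟨P1, Q1, h1⟩ := hp
    obtain ⟨P2, Q2, h2⟩ := hq
    refine ⟨P1 + P2, Q1 + Q2, fun x => ?_⟩
    simp only [map_add, h1 x, h2 x]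
    push_cast
    ring
  | mul_X p i hp =>
    obtain ⟨P1, Q1, h1⟩ := hp
    refine ⟨P1 * MvPolynomial.X i, Q1 * MvPolynomial.X i, fun x => ?_⟩
    simp only [map_mul, MvPolynomial.aeval_X, MvPolynomial.eval_X, h1 x]
    push_cast
    ring

/-- Translation of an instruction into an equation of `E_n`. -/
def toEqn (n : ℕ) (hn : 0 < n) : Instr → Eqn n
  | .one d => .one ⟨d % n, Nat.mod_lt _ hn⟩
  | .zero d => .add ⟨d % n, Nat.mod_lt _ hn⟩ ⟨d % n, Nat.mod_lt _ hn⟩ ⟨d % n, Nat.mod_lt _ hn⟩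
  | .add a b d => .add ⟨a % n, Nat.mod_lt _ hn⟩ ⟨b % n, Nat.mod_lt _ hn⟩ ⟨d % n, Nat.mod_lt _ hn⟩
  | .mul a b d => .mul ⟨a % n, Nat.mod_lt _ hn⟩ ⟨b % n, Nat.mod_lt _ hn⟩ ⟨d % n, Nat.mod_lt _ hn⟩

lemma holds_toEqn {n : ℕ} (hn : 0 < n) (x : Fin n → ℕ) (ins : Instr) :
    Eqn.Holds x (toEqn n hn ins) ↔ ins.Holds (fun j => x ⟨j % n, Nat.mod_lt _ hn⟩) := by
  cases ins <;> simp only [toEqn, Eqn.Holds, Instr.Holds] <;> omega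

lemma holds_toEqn' {n : ℕ} (hn : 0 < n) (v : ℕ → ℕ) (ins : Instr)
    (hb : ins.Below n) (h : ins.Holds v) :
    Eqn.Holds (fun i : Fin n => v i) (toEqn n hn ins) := by
  rw [holds_toEqn]
  refine Instr.holds_of_agree hb (fun j hj => ?_) h
  simp [Nat.mod_eq_of_lt hj]
end Stmt15Aux

open Stmt15Aux in
theorem stmt_15 (f : ℕ → ℕ) (r : ℕ) (hr : 2 ≤ r) (W : MvPolynomial (Fin r) ℤ)
    (hW : ∀ x1 x2 : ℕ, x1 = f x2 ↔
      ∃ x : Fin r → ℕ, x ⟨0, by omega⟩ = x1 ∧ x ⟨1, by omega⟩ = x2 ∧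
        MvPolynomial.aeval (fun i => (x i : ℤ)) W = 0) :
    ∃ (w : ℕ) (hw : 0 < w), ∀ (n : ℕ) (hn : w ≤ n),
      ∃ S : List (Eqn n),
        (∃ x : Fin n → ℕ, ∀ e ∈ S, e.Holds x) ∧
        ∀ x : Fin n → ℕ, (∀ e ∈ S, e.Holds x) → x ⟨0, by omega⟩ = f n := by
  obtain ⟨P, Q, hPQ⟩ := int_split W
  obtain ⟨eP, heP⟩ := poly_expr P
  obtain ⟨eQ, heQ⟩ := poly_expr Q
  refine ⟨2 * (r + eP.size + eQ.size) + 100, by omega, ?_⟩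
  intro n hn
  have hn0 : 0 < n := by omega
  have hbin := bin_size_bound r n
  have hszP := eP.size_pos
  have hszQ := eQ.size_pos
  have hszB := (bin r n).size_pos
  obtain ⟨c1, hc1⟩ : ∃ c1, c1 = r + eP.size := ⟨_, rfl⟩
  obtain ⟨c2, hc2⟩ : ∃ c2, c2 = c1 + eQ.size := ⟨_, rfl⟩
  obtain ⟨c3, hc3⟩ : ∃ c3, c3 = c2 + (bin r n).size := ⟨_, rfl⟩
  have hc3n : c3 < n := by omega
  have hrc1 : r ≤ c1 := by omega
  have hrc2 : r ≤ c2 := by omega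
  obtain ⟨L, hLdef⟩ : ∃ L : List Instr,
      L = (comp eP r).1 ++ (comp eQ c1).1 ++ (comp (bin r n) c2).1 ++
        [Instr.one c3, Instr.mul (c1 - 1) c3 (c2 - 1), Instr.mul 1 c3 (c3 - 1)] := ⟨_, rfl⟩
  have hmem : ∀ ins ∈ L, ins ∈ (comp eP r).1 ∨ ins ∈ (comp eQ c1).1 ∨
      ins ∈ (comp (bin r n) c2).1 ∨ ins = Instr.one c3 ∨
      ins = Instr.mul (c1 - 1) c3 (c2 - 1) ∨ ins = Instr.mul 1 c3 (c3 - 1) := by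
    intro ins h
    rw [hLdef] at h
    simp only [List.mem_append, List.mem_cons, List.mem_singleton,
      List.not_mem_nil, or_false] at h
    tauto
  have hmem1 : ∀ ins ∈ (comp eP r).1, ins ∈ L := by
    intro ins h; rw [hLdef]; simp only [List.mem_append]; tauto
  have hmem2 : ∀ ins ∈ (comp eQ c1).1, ins ∈ L := by
    intro ins h; rw [hLdef]; simp only [List.mem_append]; tauto
  have hmem3 : ∀ ins ∈ (comp (bin r n) c2).1, ins ∈ L := by
    intro ins h; rw [hLdef]; simp only [List.mem_append]; tauto
  have hmem4 : Instr.one c3 ∈ L := by rw [hLdef]; simp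
  have hmem5 : Instr.mul (c1 - 1) c3 (c2 - 1) ∈ L := by rw [hLdef]; simp
  have hmem6 : Instr.mul 1 c3 (c3 - 1) ∈ L := by rw [hLdef]; simp
  refine ⟨L.map (toEqn n hn0), ?_, ?_⟩
  · -- existence of a solution
    obtain ⟨xin, hx0, hx1, hxW⟩ := (hW (f n) n).mp rfl
    have hPQn : MvPolynomial.eval xin P = MvPolynomial.eval xin Q := by
      have h := hPQ xin
      rw [hxW] at h
      omega
    obtain ⟨v1, hv1a, hv1s⟩ :=
      comp_sat eP r le_rfl (fun j => if h : j < r then xin ⟨j, h⟩ else 0)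
    obtain ⟨v2, hv2a, hv2s⟩ := comp_sat eQ c1 hrc1 v1
    obtain ⟨v3, hv3a, hv3s⟩ := comp_sat (bin r n) c2 hrc2 v2
    obtain ⟨v4, hv4⟩ : ∃ v4, v4 = Function.update v3 c3 1 := ⟨_, rfl⟩
    have a43 : ∀ j, j < c3 → v4 j = v3 j := fun j hj => by
      rw [hv4]; exact Function.update_of_ne (by omega) _ _
    have a42 : ∀ j, j < c2 → v4 j = v2 j := fun j hj => by
      rw [a43 j (by omega), hv3a j hj]
    have a41 : ∀ j, j < c1 → v4 j = v1 j := fun j hj => by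
      rw [a42 j (by omega), hv2a j hj]
    have a4one : v4 c3 = 1 := by rw [hv4]; simp
    have ag1 : ∀ i : Fin r, v1 i = xin i := fun i => by
      rw [hv1a i i.isLt]; simp [i.isLt]
    have ag2 : ∀ i : Fin r, v2 i = xin i := fun i => by
      rw [hv2a i (by omega)]; exact ag1 i
    have ag3 : ∀ i : Fin r, v3 i = xin i := fun i => by
      rw [hv3a i (by omega)]; exact ag2 i
    have fP : v1 (c1 - 1) = MvPolynomial.eval xin P := by
      have h := comp_forced eP r le_rfl v1 xin ag1 hv1s
      rw [comp_snd] at h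
      rw [show c1 - 1 = r + eP.size - 1 by omega, h, heP]
    have fQ : v2 (c2 - 1) = MvPolynomial.eval xin Q := by
      have h := comp_forced eQ c1 hrc1 v2 xin ag2 hv2s
      rw [comp_snd] at h
      rw [show c2 - 1 = c1 + eQ.size - 1 by omega, h, heQ]
    have fN : v3 (c3 - 1) = n := by
      have h := comp_forced (bin r n) c2 hrc2 v3 xin ag3 hv3s
      rw [comp_snd] at h
      rw [show c3 - 1 = c2 + (bin r n).size - 1 by omega, h, bin_eval]
    refine ⟨fun i => v4 i, ?_⟩
    intro e he
    obtain ⟨ins, hins, rfl⟩ := List.mem_map.mp he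
    have key : ins.Below n ∧ ins.Holds v4 := by
      rcases hmem ins hins with h | h | h | h | h | h
      · have hb := comp_below eP r le_rfl ins h
        rw [comp_snd, ← hc1] at hb
        exact ⟨Instr.below_mono (by omega) hb,
          Instr.holds_of_agree hb (fun j hj => a41 j hj) (hv1s ins h)⟩
      · have hb := comp_below eQ c1 hrc1 ins h
        rw [comp_snd, ← hc2] at hb
        exact ⟨Instr.below_mono (by omega) hb,
          Instr.holds_of_agree hb (fun j hj => a42 j hj) (hv2s ins h)⟩
      · have hb := comp_below (bin r n) c2 hrc2 ins h
        rw [comp_snd, ← hc3] at hb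
        exact ⟨Instr.below_mono (by omega) hb,
          Instr.holds_of_agree hb (fun j hj => a43 j hj) (hv3s ins h)⟩
      · subst h
        exact ⟨by simp [Instr.Below]; omega, a4one⟩
      · subst h
        refine ⟨by simp [Instr.Below]; omega, ?_⟩
        show v4 (c1 - 1) * v4 c3 = v4 (c2 - 1)
        rw [a41 (c1 - 1) (by omega), a42 (c2 - 1) (by omega), a4one, fP, fQ, hPQn, mul_one]
      · subst h
        refine ⟨by simp [Instr.Below]; omega, ?_⟩
        show v4 1 * v4 c3 = v4 (c3 - 1)
        have h1r : (1 : ℕ) < r := by omega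
        have hv41 : v4 1 = n := by
          rw [a41 1 (by omega), hv1a 1 (by omega)]
          show (if h : (1 : ℕ) < r then xin ⟨1, h⟩ else 0) = n
          rw [dif_pos h1r]
          exact hx1
        rw [hv41, a4one, a43 (c3 - 1) (by omega), fN, mul_one]
    exact holds_toEqn' hn0 v4 ins key.1 key.2
  · -- every solution has x 0 = f n
    intro x hx
    obtain ⟨v, hvdef⟩ : ∃ v : ℕ → ℕ,
        v = fun j => x ⟨j % n, Nat.mod_lt _ hn0⟩ := ⟨_, rfl⟩
    have hv : ∀ ins ∈ L, ins.Holds v := by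
      intro ins hins
      rw [hvdef]
      exact (holds_toEqn hn0 x ins).mp (hx _ (List.mem_map_of_mem hins))
    obtain ⟨xin2, hxin2⟩ : ∃ xin2 : Fin r → ℕ, xin2 = fun i : Fin r => v i := ⟨_, rfl⟩
    have ag : ∀ i : Fin r, v i = xin2 i := fun i => by rw [hxin2]
    have fP : v (c1 - 1) = MvPolynomial.eval xin2 P := by
      have h := comp_forced eP r le_rfl v xin2 ag (fun ins h => hv ins (hmem1 ins h))
      rw [comp_snd] at h
      rw [show c1 - 1 = r + eP.size - 1 by omega, h, heP]
    have fQ : v (c2 - 1) = MvPolynomial.eval xin2 Q := by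
      have h := comp_forced eQ c1 hrc1 v xin2 ag (fun ins h => hv ins (hmem2 ins h))
      rw [comp_snd] at h
      rw [show c2 - 1 = c1 + eQ.size - 1 by omega, h, heQ]
    have fN : v (c3 - 1) = n := by
      have h := comp_forced (bin r n) c2 hrc2 v xin2 ag (fun ins h => hv ins (hmem3 ins h))
      rw [comp_snd] at h
      rw [show c3 - 1 = c2 + (bin r n).size - 1 by omega, h, bin_eval]
    have hone : v c3 = 1 := hv _ hmem4
    have hm1 : v (c1 - 1) * v c3 = v (c2 - 1) := hv _ hmem5
    have hm2 : v 1 * v c3 = v (c3 - 1) := hv _ hmem6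
    rw [hone, mul_one, fP, fQ] at hm1
    rw [hone, mul_one, fN] at hm2
    have hxin1 : xin2 ⟨1, by omega⟩ = n := ((ag ⟨1, by omega⟩).symm).trans hm2
    have haev : MvPolynomial.aeval (fun i => (xin2 i : ℤ)) W = 0 := by
      rw [hPQ xin2, hm1]; ring
    have h0 : v 0 = f n := (hW (v 0) n).mpr ⟨xin2, (ag ⟨0, by omega⟩).symm, hxin1, haev⟩
    have hfineq : (⟨0, by omega⟩ : Fin n) = ⟨0 % n, Nat.mod_lt 0 hn0⟩ :=
      Fin.ext (by simp)
    calc x ⟨0, by omega⟩ = x ⟨0 % n, Nat.mod_lt 0 hn0⟩ := congrArg x hfineq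
      _ = v 0 := (congrFun hvdef 0).symm
      _ = f n := h0
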